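/- Let G be an r-regular finite simple graph with n ≥ 2 vertices and m edges. Then, as real numbers, NK(G^{--}) = (n-2)^m · (n+m-1-2r)^n. -/

import Mathlib

open Finset

variable {V : Type*}

/-- The Narumi–Katayama index: the product of the degrees of all vertices. -/
def NK {W : Type*} [Fintype W] (H : SimpleGraph W) [DecidableRel H.Adj] : ℕ :=
  ∏ v, H.degree v

/-- The first Zagreb index: the sum of the squares of the degrees. -/
def M1 [Fintype V] (G : SimpleGraph V) [DecidableRel G.Adj] : ℕ :=
  ∑ v, (G.degree v) ^ 2

/-- The multiplicative sum Zagreb index: the product over the edges of `G` of the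
sum of the degrees of the two endpoints. -/
def Pi1Star [Fintype V] [DecidableEq V] (G : SimpleGraph V) [DecidableRel G.Adj] : ℕ :=
  ∏ e ∈ G.edgeFinset,
    Sym2.lift ⟨fun u v => G.degree u + G.degree v, fun u v => by simp [Nat.add_comm]⟩ e

/-- A generic transformation graph on the vertex set `V(G) ∪ E(G)`, built from a
symmetric irreflexive relation `Rvv` between vertices, a symmetric irreflexive relation
`Ree` between edges, and an incidence relation `Rve` between vertices and edges. -/
def transGraph (G : SimpleGraph V) (Rvv : V → V → Prop) (Ree : Sym2 V → Sym2 V → Prop)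
    (Rve : V → Sym2 V → Prop)
    (hvv : Symmetric Rvv) (hvv' : Irreflexive Rvv)
    (hee : Symmetric Ree) (hee' : Irreflexive Ree) :
    SimpleGraph (V ⊕ G.edgeSet) where
  Adj a b :=
    match a, b with
    | Sum.inl u, Sum.inl v => Rvv u v
    | Sum.inr e, Sum.inr f => Ree e.1 f.1
    | Sum.inl u, Sum.inr e => Rve u e.1
    | Sum.inr e, Sum.inl u => Rve u e.1
  symm := ⟨by
    rintro (u | e) (v | f) h
    · exact hvv h
    · exact h
    · exact h
    · exact hee h⟩
  loopless := ⟨by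
    rintro (u | e) h
    · exact hvv' u h
    · exact hee' e.1 h⟩

instance transGraph.instDecidableAdj (G : SimpleGraph V) (Rvv : V → V → Prop)
    (Ree : Sym2 V → Sym2 V → Prop) (Rve : V → Sym2 V → Prop)
    (h1 : Symmetric Rvv) (h2 : Irreflexive Rvv) (h3 : Symmetric Ree) (h4 : Irreflexive Ree)
    [DecidableRel Rvv] [DecidableRel Ree] [∀ u e, Decidable (Rve u e)] :
    DecidableRel (transGraph G Rvv Ree Rve h1 h2 h3 h4).Adj := fun a b =>
  match a, b with
  | Sum.inl u, Sum.inl v => inferInstanceAs (Decidable (Rvv u v))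
  | Sum.inr e, Sum.inr f => inferInstanceAs (Decidable (Ree e.1 f.1))
  | Sum.inl u, Sum.inr e => inferInstanceAs (Decidable (Rve u e.1))
  | Sum.inr e, Sum.inl u => inferInstanceAs (Decidable (Rve u e.1))

/-- Two edges (as elements of `Sym2 V`) are adjacent: distinct and sharing an endpoint. -/
abbrev shareRel : Sym2 V → Sym2 V → Prop := fun e f => e ≠ f ∧ ∃ w, w ∈ e ∧ w ∈ f

lemma shareRel_symm : Symmetric (shareRel (V := V)) :=
  fun _ _ h => ⟨h.1.symm, h.2.imp fun _ hw => ⟨hw.2, hw.1⟩⟩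

lemma shareRel_irrefl : Irreflexive (shareRel (V := V)) := fun _ h => h.1 rfl

/-- Two edges are "non-adjacent": distinct and sharing no endpoint. -/
abbrev coshareRel : Sym2 V → Sym2 V → Prop := fun e f => e ≠ f ∧ ∀ w, w ∈ e → w ∉ f

lemma coshareRel_symm : Symmetric (coshareRel (V := V)) :=
  fun _ _ h => ⟨h.1.symm, fun w hf he => h.2 w he hf⟩

lemma coshareRel_irrefl : Irreflexive (coshareRel (V := V)) := fun _ h => h.1 rfl

/-- Non-adjacency of distinct vertices. -/
abbrev coAdj (G : SimpleGraph V) : V → V → Prop := fun u v => u ≠ v ∧ ¬ G.Adj u v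

lemma coAdj_symm (G : SimpleGraph V) : Symmetric (coAdj G) :=
  fun _ _ h => ⟨h.1.symm, fun ha => h.2 ha.symm⟩

lemma coAdj_irrefl (G : SimpleGraph V) : Irreflexive (coAdj G) := fun _ h => h.1 rfl

variable [Fintype V] [DecidableEq V]

/-- The transformation graph `G^{--}`. -/
abbrev Gmm (G : SimpleGraph V) [DecidableRel G.Adj] : SimpleGraph (V ⊕ G.edgeSet) :=
  transGraph G (coAdj G) (fun _ _ => False) (fun u e => u ∉ e)
    (coAdj_symm G) (coAdj_irrefl G) (fun _ _ h => h.elim) (fun _ h => h)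

instance Gmm.instDecidableAdj (G : SimpleGraph V) [DecidableRel G.Adj] : DecidableRel (Gmm G).Adj :=
  fun a b => transGraph.instDecidableAdj G _ _ _ _ _ _ _ a b


lemma card_filter_sum_univ {α β : Type*} [Fintype α] [Fintype β] (p : α ⊕ β → Prop)
    [DecidablePred p] :
    (Finset.univ.filter p).card
      = (Finset.univ.filter (fun a => p (Sum.inl a))).card
        + (Finset.univ.filter (fun b => p (Sum.inr b))).card := by
  rw [← Finset.card_toLeft_add_card_toRight]
  have hl : (Finset.univ.filter p).toLeft = Finset.univ.filter (fun a => p (Sum.inl a)) := by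
    ext a; simp
  have hr : (Finset.univ.filter p).toRight = Finset.univ.filter (fun b => p (Sum.inr b)) := by
    ext b; simp
  rw [hl, hr]

lemma deg_inl (G : SimpleGraph V) [DecidableRel G.Adj] {r : ℕ}
    (hreg : G.IsRegularOfDegree r) (u : V) :
    (Gmm G).degree (Sum.inl u : V ⊕ G.edgeSet)
      = (Fintype.card V - 1 - r) + (G.edgeFinset.card - r) := by
  rw [SimpleGraph.degree, SimpleGraph.neighborFinset_eq_filter, card_filter_sum_univ]
  congr 1
  · have h1 : (Finset.univ.filter fun v => (Gmm G).Adj (Sum.inl u : V ⊕ G.edgeSet) (Sum.inl v))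
        = (insert u (G.neighborFinset u))ᶜ := by
      ext v
      simp only [Finset.mem_filter, Finset.mem_univ, true_and, Finset.mem_compl,
        Finset.mem_insert, SimpleGraph.mem_neighborFinset]
      constructor
      · rintro ⟨h1, h2⟩ (rfl | h); exacts [h1 rfl, h2 h]
      · intro h; push_neg at h; exact ⟨Ne.symm h.1, h.2⟩
    rw [h1, Finset.card_compl, Finset.card_insert_of_notMem (by simp),
      SimpleGraph.card_neighborFinset_eq_degree, hreg u]
    omega
  · have h2 : (Finset.univ.filter fun e : G.edgeSet => u ∈ e.1).card = r := by
      rw [← Fintype.card_subtype, ← hreg u, ← SimpleGraph.card_incidenceSet_eq_degree]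
      exact Fintype.card_congr
        ⟨fun e => ⟨e.1.1, e.1.2, e.2⟩, fun e => ⟨⟨e.1, e.2.1⟩, e.2.2⟩,
          fun e => rfl, fun e => rfl⟩
    have h3 : (Finset.univ.filter fun e : G.edgeSet => (Gmm G).Adj (Sum.inl u : V ⊕ G.edgeSet) (Sum.inr e)).card
        = Fintype.card G.edgeSet - r := by
      have := Finset.card_filter_add_card_filter_not
        (s := (Finset.univ : Finset G.edgeSet)) (p := fun e : G.edgeSet => u ∈ e.1)
      have hadj : (Finset.univ.filter fun e : G.edgeSet => (Gmm G).Adj (Sum.inl u : V ⊕ G.edgeSet) (Sum.inr e))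
          = Finset.univ.filter (fun e : G.edgeSet => ¬ (u ∈ e.1)) := by
        ext e; simp only [Finset.mem_filter, Finset.mem_univ, true_and]; exact Iff.rfl
      rw [hadj]
      simp only [Finset.card_univ] at this
      omega
    rw [h3, ← SimpleGraph.edgeFinset_card]

lemma deg_inr (G : SimpleGraph V) [DecidableRel G.Adj] (e : G.edgeSet) :
    (Gmm G).degree (Sum.inr e) = Fintype.card V - 2 := by
  rw [SimpleGraph.degree, SimpleGraph.neighborFinset_eq_filter, card_filter_sum_univ]
  have h0 : (Finset.univ.filter fun f : G.edgeSet => (Gmm G).Adj (Sum.inr e) (Sum.inr f)) = ∅ := by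
    ext f; simp only [Finset.mem_filter, Finset.mem_univ, true_and, Finset.notMem_empty, iff_false]
    exact fun h => h
  rw [h0, Finset.card_empty, Nat.add_zero]
  obtain ⟨ee, he⟩ := e
  induction ee with
  | _ a b =>
    have hab : a ≠ b := ((SimpleGraph.mem_edgeSet (G := G)).mp he).ne
    have h1 : (Finset.univ.filter fun v =>
        (Gmm G).Adj (Sum.inr ⟨s(a, b), he⟩) (Sum.inl v)) = ({a, b} : Finset V)ᶜ := by
      ext v
      simp only [Finset.mem_filter, Finset.mem_univ, true_and, Finset.mem_compl,
        Finset.mem_insert, Finset.mem_singleton]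
      constructor
      · intro h hm
        exact h (by simpa [Sym2.mem_iff] using hm)
      · intro h
        show ¬ v ∈ s(a, b)
        simp only [Sym2.mem_iff]
        tauto
    rw [h1, Finset.card_compl, Finset.card_insert_of_notMem (by simpa),
      Finset.card_singleton]

theorem stmt_5 (G : SimpleGraph V) [DecidableRel G.Adj]
    (hn : 2 ≤ Fintype.card V)
    (r : ℕ)
    (hreg : G.IsRegularOfDegree r) :
    (NK (Gmm G) : ℝ) = ((Fintype.card V : ℝ) - 2) ^ G.edgeFinset.card * ((Fintype.card V : ℝ) + G.edgeFinset.card - 1 - 2 * r) ^ Fintype.card V := by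
  classical
  have hne : Nonempty V := Fintype.card_pos_iff.mp (by omega)
  obtain ⟨v0⟩ := hne
  have hrn : r + 1 ≤ Fintype.card V := by
    have := G.degree_lt_card_verts v0; rw [hreg v0] at this; omega
  have hrm : r ≤ G.edgeFinset.card := by
    have hsum := G.sum_degrees_eq_twice_card_edges
    have : ∑ v, G.degree v = Fintype.card V * r := by
      rw [Finset.sum_congr rfl fun v _ => hreg v]; simp [Finset.card_univ, Nat.mul_comm]
    nlinarith [Fintype.card V, G.edgeFinset.card]
  have hNK : NK (Gmm G)
      = ((Fintype.card V - 1 - r) + (G.edgeFinset.card - r)) ^ Fintype.card V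
        * (Fintype.card V - 2) ^ G.edgeFinset.card := by
    rw [NK, Fintype.prod_sum_type]
    rw [Finset.prod_congr rfl fun u _ => deg_inl G hreg u,
      Finset.prod_congr rfl fun e _ => deg_inr G e]
    simp [Finset.card_univ, SimpleGraph.edgeFinset_card]
  rw [hNK]
  push_cast [Nat.sub_sub]
  rw [Nat.cast_sub (by omega), Nat.cast_sub hrm, Nat.cast_sub (by omega)]
  push_cast
  ring
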